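/- (Generalized pseudo-additivity) For any bipartite density matrix ρ_AB on C^{d_A} ⊗ C^{d_B} with marginals ρ_A, ρ_B, and S_L(ρ) := 1 − Tr(ρ²), one has 1 − (d_A d_B / 4)(1 − S_L(ρ_AB) + 1/(d_A d_B))² ≤ S_L(ρ_A) + S_L(ρ_B) − S_L(ρ_A) S_L(ρ_B). -/

import Mathlib

open Matrix BigOperators Kronecker ComplexOrder

noncomputable def purity {n : Type*} [Fintype n] (ρ : Matrix n n ℂ) : ℝ :=
  ((ρ * ρ).trace).re

def IsDensity {n : Type*} [Fintype n] (ρ : Matrix n n ℂ) : Prop :=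
  ρ.PosSemidef ∧ ρ.trace = 1

noncomputable def ptraceB {m p : Type*} [Fintype p] (ρ : Matrix (m × p) (m × p) ℂ) :
    Matrix m m ℂ :=
  Matrix.of fun i j => ∑ k, ρ (i, k) (j, k)

noncomputable def ptraceA {m p : Type*} [Fintype m] (ρ : Matrix (m × p) (m × p) ℂ) :
    Matrix p p ℂ :=
  Matrix.of fun i j => ∑ k, ρ (k, i) (k, j)

noncomputable def ptraceMid {a b c : Type*} [Fintype b]
    (ρ : Matrix (a × b × c) (a × b × c) ℂ) : Matrix (a × c) (a × c) ℂ :=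
  Matrix.of fun i j => ∑ k, ρ (i.1, k, i.2) (j.1, k, j.2)

noncomputable def linEnt {n : Type*} [Fintype n] (ρ : Matrix n n ℂ) : ℝ := 1 - purity ρ

section aux
set_option linter.unusedSectionVars false
variable {m p : Type*} [Fintype m] [Fintype p] [DecidableEq m] [DecidableEq p]

lemma trace_mul_kron_one (ρ : Matrix (m × p) (m × p) ℂ) (C : Matrix m m ℂ) :
    (ρ * (C ⊗ₖ (1 : Matrix p p ℂ))).trace = ((ptraceB ρ) * C).trace := by
  have lhs : (ρ * (C ⊗ₖ (1 : Matrix p p ℂ))).trace = ∑ i, ∑ k, ∑ j, ρ (i,k) (j,k) * C j i := by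
    rw [Matrix.trace, Fintype.sum_prod_type]
    refine Finset.sum_congr rfl fun i _ => Finset.sum_congr rfl fun k _ => ?_
    simp only [Matrix.diag, Matrix.mul_apply, Matrix.kroneckerMap_apply, Matrix.one_apply,
      Fintype.sum_prod_type, mul_ite, mul_one, mul_zero, Finset.sum_ite_eq',
      Finset.mem_univ, if_true]
  have rhs : ((ptraceB ρ) * C).trace = ∑ i, ∑ j, ∑ k, ρ (i,k) (j,k) * C j i := by
    rw [Matrix.trace]
    refine Finset.sum_congr rfl fun i _ => ?_
    simp only [Matrix.diag, Matrix.mul_apply, ptraceB, Matrix.of_apply, Finset.sum_mul]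
  rw [lhs, rhs]
  exact Finset.sum_congr rfl fun i _ => Finset.sum_comm

lemma trace_one_kron_mul (ρ : Matrix (m × p) (m × p) ℂ) (C : Matrix p p ℂ) :
    (ρ * ((1 : Matrix m m ℂ) ⊗ₖ C)).trace = ((ptraceA ρ) * C).trace := by
  have lhs : (ρ * ((1 : Matrix m m ℂ) ⊗ₖ C)).trace = ∑ i, ∑ k, ∑ l, ρ (i,k) (i,l) * C l k := by
    rw [Matrix.trace, Fintype.sum_prod_type]
    refine Finset.sum_congr rfl fun i _ => Finset.sum_congr rfl fun k _ => ?_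
    simp only [Matrix.diag, Matrix.mul_apply, Matrix.kroneckerMap_apply, Matrix.one_apply,
      Fintype.sum_prod_type, ite_mul, one_mul, zero_mul, mul_ite, mul_zero]
    rw [Finset.sum_comm]
    simp only [Finset.sum_ite_eq', Finset.mem_univ, if_true]
  have rhs : ((ptraceA ρ) * C).trace = ∑ k, ∑ l, ∑ i, ρ (i,k) (i,l) * C l k := by
    rw [Matrix.trace]
    refine Finset.sum_congr rfl fun k _ => ?_
    simp only [Matrix.diag, Matrix.mul_apply, ptraceA, Matrix.of_apply, Finset.sum_mul]
  rw [lhs, rhs, Finset.sum_comm]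
  exact Finset.sum_congr rfl fun k _ => Finset.sum_comm

lemma trace_ptraceB (ρ : Matrix (m × p) (m × p) ℂ) : (ptraceB ρ).trace = ρ.trace := by
  simp [Matrix.trace, Matrix.diag, ptraceB, Fintype.sum_prod_type]

lemma trace_ptraceA (ρ : Matrix (m × p) (m × p) ℂ) : (ptraceA ρ).trace = ρ.trace := by
  simp only [Matrix.trace, Matrix.diag, ptraceA, Matrix.of_apply, Fintype.sum_prod_type]
  exact Finset.sum_comm

lemma kron_conjT (A : Matrix m m ℂ) (B : Matrix p p ℂ) : (A ⊗ₖ B)ᴴ = Aᴴ ⊗ₖ Bᴴ := by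
  ext ⟨i,k⟩ ⟨j,l⟩
  simp [Matrix.conjTranspose_apply, Matrix.kroneckerMap_apply, mul_comm]

lemma ptraceB_herm {ρ : Matrix (m × p) (m × p) ℂ} (h : ρ.IsHermitian) :
    (ptraceB ρ).IsHermitian := by
  ext i j
  simp only [Matrix.conjTranspose_apply, ptraceB, Matrix.of_apply, star_sum]
  exact Finset.sum_congr rfl fun k _ => h.apply _ _

lemma ptraceA_herm {ρ : Matrix (m × p) (m × p) ℂ} (h : ρ.IsHermitian) :
    (ptraceA ρ).IsHermitian := by
  ext i j
  simp only [Matrix.conjTranspose_apply, ptraceA, Matrix.of_apply, star_sum]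
  exact Finset.sum_congr rfl fun k _ => h.apply _ _

lemma trace_sq_re_nonneg {n : Type*} [Fintype n] {M : Matrix n n ℂ} (h : M.IsHermitian) :
    0 ≤ ((M * M).trace).re := by
  have key : (M * M).trace = ∑ i, ∑ j, (Complex.normSq (M i j) : ℂ) := by
    simp only [Matrix.trace, Matrix.diag, Matrix.mul_apply]
    refine Finset.sum_congr rfl fun i _ => Finset.sum_congr rfl fun j _ => ?_
    rw [← h.apply i j]
    simp [Matrix.conjTranspose_apply, Complex.normSq_eq_conj_mul_self, mul_comm]
  rw [key, Complex.re_sum]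
  refine Finset.sum_nonneg fun i _ => ?_
  rw [Complex.re_sum]
  exact Finset.sum_nonneg fun j _ => by simp [Complex.normSq_nonneg]
end aux

set_option maxHeartbeats 1000000 in
theorem generalized_pseudo_additivity
    (dA dB : ℕ) (hdA : 0 < dA) (hdB : 0 < dB)
    (ρ : Matrix (Fin dA × Fin dB) (Fin dA × Fin dB) ℂ) (hρ : IsDensity ρ) :
    1 - ((dA : ℝ) * dB / 4) * (1 - linEnt ρ + 1 / ((dA : ℝ) * dB)) ^ 2 ≤
      linEnt (ptraceB ρ) + linEnt (ptraceA ρ)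
        - linEnt (ptraceB ρ) * linEnt (ptraceA ρ) := by
  obtain ⟨hpsd, htr⟩ := hρ
  have hρH : ρ.IsHermitian := hpsd.1
  set A := ptraceB ρ with hAdef
  set B := ptraceA ρ with hBdef
  have hA : A.IsHermitian := ptraceB_herm hρH
  have hB : B.IsHermitian := ptraceA_herm hρH
  have trA : A.trace = 1 := by rw [hAdef, trace_ptraceB, htr]
  have trB : B.trace = 1 := by rw [hBdef, trace_ptraceA, htr]
  set a' : ℂ := (dA : ℂ) with ha'
  set b' : ℂ := (dB : ℂ) with hb'
  set X := A ⊗ₖ (1 : Matrix (Fin dB) (Fin dB) ℂ) with hX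
  set Y := (1 : Matrix (Fin dA) (Fin dA) ℂ) ⊗ₖ B with hY
  set M := ρ - b'⁻¹ • X - a'⁻¹ • Y + (a' * b')⁻¹ • (1 : Matrix (Fin dA × Fin dB) (Fin dA × Fin dB) ℂ) with hM
  -- base traces
  have tρX : (ρ * X).trace = (A * A).trace := trace_mul_kron_one ρ A
  have tρY : (ρ * Y).trace = (B * B).trace := trace_one_kron_mul ρ B
  have tXX : (X * X).trace = (A * A).trace * b' := by
    rw [hX, ← Matrix.mul_kronecker_mul, Matrix.trace_kronecker, mul_one, Matrix.trace_one]
    simp [hb']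
  have tYY : (Y * Y).trace = (B * B).trace * a' := by
    rw [hY, ← Matrix.mul_kronecker_mul, Matrix.trace_kronecker, mul_one, Matrix.trace_one]
    simp [ha', mul_comm]
  have tXY : (X * Y).trace = 1 := by
    rw [hX, hY, ← Matrix.mul_kronecker_mul, Matrix.trace_kronecker, mul_one, one_mul, trA, trB,
      one_mul]
  have tX : X.trace = b' := by
    rw [hX, Matrix.trace_kronecker, trA, Matrix.trace_one, one_mul]; simp [hb']
  have tY : Y.trace = a' := by
    rw [hY, Matrix.trace_kronecker, trB, Matrix.trace_one, mul_one]; simp [ha']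
  have t11 : (1 : Matrix (Fin dA × Fin dB) (Fin dA × Fin dB) ℂ).trace = a' * b' := by
    rw [Matrix.trace_one]; simp [ha', hb']
  have ha0 : a' ≠ 0 := by simp [ha']; omega
  have hb0 : b' ≠ 0 := by simp [hb']; omega
  -- key trace identity
  have key : (M * M).trace =
      (ρ * ρ).trace - b'⁻¹ * (A * A).trace - a'⁻¹ * (B * B).trace + (a' * b')⁻¹ := by
    rw [hM]
    simp only [sub_mul, mul_sub, add_mul, mul_add, Matrix.smul_mul, Matrix.mul_smul,
      Matrix.mul_one, Matrix.one_mul, smul_smul, Matrix.trace_add, Matrix.trace_sub,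
      Matrix.trace_smul]
    rw [tρX, tρY, tXX, tYY, tXY, tX, tY, t11, htr,
      Matrix.trace_mul_comm X ρ, tρX, Matrix.trace_mul_comm Y ρ, tρY,
      Matrix.trace_mul_comm Y X, tXY]
    field_simp
    ring_nf
    field_simp
    ring
  -- M is Hermitian
  have hMh : M.IsHermitian := by
    rw [Matrix.IsHermitian, hM]
    simp only [Matrix.conjTranspose_add, Matrix.conjTranspose_sub, Matrix.conjTranspose_smul,
      Matrix.conjTranspose_one, hX, hY, kron_conjT, hA.eq, hB.eq, hρH.eq,
      Matrix.conjTranspose_one]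
    simp [ha', hb', star_inv₀]
  have hkey := trace_sq_re_nonneg hMh
  rw [key] at hkey
  -- translate to reals
  have hre : 0 ≤ purity ρ - ((dB : ℝ))⁻¹ * purity A
      - ((dA : ℝ))⁻¹ * purity B + ((dA : ℝ) * dB)⁻¹ := by
    convert hkey using 1
    simp [purity, ha', hb', Complex.sub_re, Complex.add_re, Complex.mul_re]
  -- final real inequality
  have hx : 0 ≤ purity A := trace_sq_re_nonneg hA
  have hy : 0 ≤ purity B := trace_sq_re_nonneg hB
  set p := purity ρ with hp
  set x := purity A with hxd
  set y := purity B with hyd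
  set da : ℝ := (dA : ℝ) with hda
  set db : ℝ := (dB : ℝ) with hdb
  have hda0 : (0:ℝ) < da := by simp [hda]; omega
  have hdb0 : (0:ℝ) < db := by simp [hdb]; omega
  have hd0 : (0:ℝ) < da * db := mul_pos hda0 hdb0
  have hre' : x / db + y / da ≤ p + 1 / (da * db) := by
    have : p - db⁻¹ * x - da⁻¹ * y + (da * db)⁻¹ = p + 1/(da*db) - (x/db + y/da) := by
      field_simp; ring
    linarith [hre, this.symm.le]
  have h2 : da * x + db * y ≤ da * db * p + 1 := by
    have := mul_le_mul_of_nonneg_left hre' (le_of_lt hd0)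
    calc da * x + db * y = (da * db) * (x / db + y / da) := by field_simp
    _ ≤ (da * db) * (p + 1/(da*db)) := this
    _ = da * db * p + 1 := by field_simp
  have hRHS : linEnt A + linEnt B - linEnt A * linEnt B = 1 - x * y := by
    simp only [linEnt, ← hxd, ← hyd]; ring
  have hLp : 1 - linEnt ρ = p := by simp [linEnt, hp]
  rw [hRHS, hLp]
  rw [sub_le_sub_iff_left]
  have expand : ((dA:ℝ) * dB / 4) * (p + 1 / ((dA:ℝ) * dB)) ^ 2
      = (da * db * p + 1)^2 / (4 * (da * db)) := by
    rw [← hda, ← hdb]; field_simp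
  rw [expand, le_div_iff₀ (by positivity)]
  have h3 : 0 ≤ da * x + db * y :=
    add_nonneg (mul_nonneg hda0.le hx) (mul_nonneg hdb0.le hy)
  have h4 : (da * x + db * y) ^ 2 ≤ (da * db * p + 1) ^ 2 := pow_le_pow_left₀ h3 h2 2
  nlinarith [h4, sq_nonneg (da * x - db * y)]
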